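/- Let K be a field of characteristic zero and let y_0 ∈ K[[x_1,...,x_r]] be a simple root of a nonzero polynomial P(x,y) ∈ K[x_1,...,x_r, y] with deg_x P ≤ d_x and deg_y P ≤ d_y (simple root means P(x,y_0) = 0 and ∂P/∂y (x, y_0) ≠ 0). If y_1 ∈ K[[x_1,...,x_r]] is any other root of P with y_1 ≠ y_0, then the order of the power series y_0 − y_1 is at most 2·d_x·d_y. -/

import Mathlib

open Polynomial

section Aux

variable {K : Type*} [Field K] {r : ℕ}

/-- all coefficients in total degree ≤ N vanish -/
def LowZero (N : ℕ) (f : MvPowerSeries (Fin r) K) : Prop :=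
  ∀ n : Fin r →₀ ℕ, (∑ i, n i) ≤ N → MvPowerSeries.coeff n f = 0

lemma LowZero.mul_left {N : ℕ} {f : MvPowerSeries (Fin r) K} (hf : LowZero N f)
    (g : MvPowerSeries (Fin r) K) : LowZero N (g * f) := by
  intro n hn
  rw [MvPowerSeries.coeff_mul]
  refine Finset.sum_eq_zero fun p hp => ?_
  rw [Finset.HasAntidiagonal.mem_antidiagonal] at hp
  have hq : (∑ i, p.2 i) ≤ N := by
    refine le_trans ?_ hn
    have : ∑ i, n i = (∑ i, p.1 i) + ∑ i, p.2 i := by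
      rw [← Finset.sum_add_distrib]; exact Finset.sum_congr rfl fun i _ => by
        rw [← hp]; rfl
    omega
  rw [hf p.2 hq, mul_zero]

lemma not_lowZero_of_poly {N : ℕ} {g : MvPolynomial (Fin r) K} (hg : g ≠ 0)
    (hdeg : g.totalDegree ≤ N) :
    ¬ LowZero N (g : MvPowerSeries (Fin r) K) := by
  intro h
  apply hg
  ext n
  rw [MvPolynomial.coeff_zero]
  by_cases hn : n ∈ g.support
  · have h1 : (n.sum fun _ e => e) ≤ g.totalDegree := MvPolynomial.le_totalDegree hn
    have h2 : (∑ i, n i) = n.sum fun _ e => e := by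
      rw [Finsupp.sum_fintype]; intro i; rfl
    have := h n (by omega)
    rwa [MvPolynomial.coeff_coe] at this
  · simpa using hn


lemma deriv_eval_factor {R : Type*} [CommRing R] [IsDomain R] {h : R[X]} {a b : R}
    (ha : h.eval a = 0) (hb : h.eval b = 0) (hab : a ≠ b) :
    ∃ s : R, h.derivative.eval a = (a - b) * s := by
  obtain ⟨q, hq⟩ := dvd_iff_isRoot.mpr ha
  have hqb : q.eval b = 0 := by
    have hb' := hb
    rw [hq] at hb'
    simp only [eval_mul, eval_sub, eval_X, eval_C] at hb'
    rcases mul_eq_zero.mp hb' with h1 | h1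
    · exact absurd (sub_eq_zero.mp h1).symm hab
    · exact h1
  obtain ⟨s, hs⟩ := dvd_iff_isRoot.mpr hqb
  refine ⟨s.eval a, ?_⟩
  rw [hq, derivative_mul, hs]
  simp only [derivative_sub, derivative_X, derivative_C, sub_zero, one_mul, eval_add, eval_mul,
    eval_sub, eval_X, eval_C, sub_self, zero_mul, mul_zero]
  ring



local notation "A" => MvPolynomial (Fin r) K

noncomputable def degX (F : Polynomial (MvPolynomial (Fin r) K)) : ℕ :=
  F.support.sup fun j => (F.coeff j).totalDegree

lemma coeff_totalDegree_le_degX (F : Polynomial (MvPolynomial (Fin r) K)) (j : ℕ) :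
    (F.coeff j).totalDegree ≤ degX F := by
  by_cases h : j ∈ F.support
  · exact Finset.le_sup (f := fun j => ((F.coeff j)).totalDegree) h
  · rw [Polynomial.notMem_support_iff.mp h]
    simp

lemma homogeneousComponent_totalDegree_ne_zero {f : MvPolynomial (Fin r) K} (hf : f ≠ 0) :
    MvPolynomial.homogeneousComponent f.totalDegree f ≠ 0 := by
  obtain ⟨n, hn, hsup⟩ := Finset.exists_mem_eq_sup f.support
    (MvPolynomial.support_nonempty.mpr hf) (fun n => n.sum fun _ e => e)
  intro h0
  have := congrArg (MvPolynomial.coeff n) h0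
  rw [MvPolynomial.coeff_homogeneousComponent] at this
  rw [if_pos (by rw [MvPolynomial.totalDegree, hsup]; rfl)] at this
  exact (MvPolynomial.mem_support_iff.mp hn) (by simpa using this)

noncomputable def psiA : MvPolynomial (Fin r) K →+*
    Polynomial (Polynomial (MvPolynomial (Fin r) K)) :=
  MvPolynomial.eval₂Hom (Polynomial.C.comp (Polynomial.C.comp MvPolynomial.C))
    (fun i => Polynomial.C (Polynomial.C (MvPolynomial.X i)) * Polynomial.X)

lemma psiA_monomial (n : Fin r →₀ ℕ) (c : K) :
    psiA (MvPolynomial.monomial n c)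
      = Polynomial.C (Polynomial.C (MvPolynomial.monomial n c))
          * Polynomial.X ^ (n.sum fun _ e => e) := by
  rw [psiA, MvPolynomial.eval₂Hom_monomial]
  have h1 : (n.prod fun i e => (Polynomial.C (Polynomial.C (MvPolynomial.X i : A))
      * Polynomial.X) ^ e)
      = (n.prod fun i e => Polynomial.C (Polynomial.C ((MvPolynomial.X i : A) ^ e)))
        * Polynomial.X ^ (n.sum fun _ e => e) := by
    rw [Finsupp.prod, Finsupp.prod, Finsupp.sum, ← Finset.prod_pow_eq_pow_sum n.support (⇑n) (Polynomial.X : Polynomial (Polynomial A)),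
      ← Finset.prod_mul_distrib]
    exact Finset.prod_congr rfl fun i _ => by simp only [map_pow]; exact mul_pow (M := Polynomial (Polynomial A)) _ _ _
  rw [h1, ← mul_assoc]
  congr 1
  simp only [MvPolynomial.monomial_eq, map_mul, map_finsuppProd, RingHom.comp_apply]

lemma psiA_coeff (f : MvPolynomial (Fin r) K) (d : ℕ) :
    (psiA f).coeff d = Polynomial.C (MvPolynomial.homogeneousComponent d f) := by
  conv_lhs => rw [f.as_sum, map_sum, Polynomial.finset_sum_coeff]
  rw [MvPolynomial.homogeneousComponent_apply, Finset.sum_filter, map_sum]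
  refine Finset.sum_congr rfl fun n _ => ?_
  rw [psiA_monomial, Polynomial.C_mul_X_pow_eq_monomial, Polynomial.coeff_monomial]
  have : n.degree = n.sum fun _ e => e := rfl
  by_cases h : n.degree = d
  · rw [if_pos (by rw [← this, h]), if_pos h]
  · rw [if_neg (by rw [← this]; exact h), if_neg h, map_zero]

noncomputable def PsiP : Polynomial (MvPolynomial (Fin r) K) →+*
    Polynomial (Polynomial (MvPolynomial (Fin r) K)) :=
  Polynomial.eval₂RingHom (S := Polynomial (Polynomial (MvPolynomial (Fin r) K))) psiA (Polynomial.C Polynomial.X)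

lemma PsiP_coeff (F : Polynomial (MvPolynomial (Fin r) K)) (d : ℕ) :
    (PsiP F).coeff d = ∑ j ∈ F.support,
      Polynomial.C (MvPolynomial.homogeneousComponent d (F.coeff j)) * Polynomial.X ^ j := by
  rw [PsiP, Polynomial.coe_eval₂RingHom, Polynomial.eval₂_eq_sum, Polynomial.sum,
    Polynomial.finset_sum_coeff]
  refine Finset.sum_congr rfl fun j _ => ?_
  rw [← map_pow, Polynomial.coeff_mul_C, psiA_coeff]

lemma natDegree_PsiP {F : Polynomial (MvPolynomial (Fin r) K)} (hF : F ≠ 0) :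
    (PsiP F).natDegree = degX F ∧ PsiP F ≠ 0 := by
  have hle : (PsiP F).natDegree ≤ degX F := by
    rw [Polynomial.natDegree_le_iff_coeff_eq_zero]
    intro d hd
    rw [PsiP_coeff]
    refine Finset.sum_eq_zero fun j hj => ?_
    rw [MvPolynomial.homogeneousComponent_eq_zero, map_zero, zero_mul]
    exact lt_of_le_of_lt (coeff_totalDegree_le_degX F j) hd
  obtain ⟨j0, hj0, hsup⟩ := Finset.exists_mem_eq_sup F.support
    (Polynomial.support_nonempty.mpr hF) (fun j => (F.coeff j).totalDegree)
  have hcne : (PsiP F).coeff (degX F) ≠ 0 := by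
    rw [PsiP_coeff]
    intro h0
    have := congrArg (fun q => Polynomial.coeff q j0) h0
    simp only [Polynomial.finset_sum_coeff, Polynomial.C_mul_X_pow_eq_monomial,
      Polynomial.coeff_monomial, Polynomial.coeff_zero] at this
    rw [Finset.sum_eq_single j0] at this
    · rw [if_pos rfl] at this
      have hne : MvPolynomial.homogeneousComponent (F.coeff j0).totalDegree (F.coeff j0) ≠ 0 :=
        homogeneousComponent_totalDegree_ne_zero (Polynomial.mem_support_iff.mp hj0)
      rw [degX, hsup] at this
      exact hne this
    · exact fun b _ hb => by rw [if_neg hb]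
    · exact fun h => absurd hj0 h
  have hne0 : PsiP F ≠ 0 := fun h => hcne (by rw [h, Polynomial.coeff_zero])
  exact ⟨le_antisymm hle (Polynomial.le_natDegree_of_ne_zero hcne), hne0⟩

lemma degX_mul {F G : Polynomial (MvPolynomial (Fin r) K)} (hF : F ≠ 0) (hG : G ≠ 0) :
    degX (F * G) = degX F + degX G := by
  obtain ⟨hdF, hneF⟩ := natDegree_PsiP hF
  obtain ⟨hdG, hneG⟩ := natDegree_PsiP hG
  obtain ⟨hdFG, _⟩ := natDegree_PsiP (mul_ne_zero hF hG)
  rw [← hdF, ← hdG, ← hdFG, map_mul, Polynomial.natDegree_mul hneF hneG]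

lemma degX_le_of_dvd {F P : Polynomial (MvPolynomial (Fin r) K)} (h : F ∣ P) (hP : P ≠ 0) :
    degX F ≤ degX P := by
  obtain ⟨G, rfl⟩ := h
  have hF : F ≠ 0 := fun h => hP (by rw [h, zero_mul])
  have hG : G ≠ 0 := fun h => hP (by rw [h, mul_zero])
  rw [degX_mul hF hG]
  omega




section Sylvester

variable (k : Type*) [Field k] (θ : MvPolynomial (Fin r) K →+* k)
  (F : Polynomial (MvPolynomial (Fin r) K)) (n : ℕ)

/-- the shifted polynomials forming the rows of the Sylvester matrix of `F` and `F'` -/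
noncomputable def sylW : Fin (n-1) ⊕ Fin n → Polynomial (MvPolynomial (Fin r) K) :=
  fun i => match i with
  | .inl i => F * X ^ (i : ℕ)
  | .inr j => F.derivative * X ^ (j : ℕ)

noncomputable def sylM : Matrix (Fin (n-1) ⊕ Fin n) (Fin (n-1) ⊕ Fin n)
    (MvPolynomial (Fin r) K) :=
  fun i kk => (sylW F n i).coeff (finSumFinEquiv kk : ℕ)

lemma sylW_natDegree_lt (hn : F.natDegree = n) (hn1 : 1 ≤ n) (i : Fin (n-1) ⊕ Fin n) :
    (sylW F n i).natDegree < (n-1) + n := by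
  match i with
  | .inl i =>
    refine lt_of_le_of_lt (natDegree_mul_le) ?_
    rw [hn, natDegree_X_pow]
    have := i.2
    omega
  | .inr j =>
    refine lt_of_le_of_lt (natDegree_mul_le) ?_
    have h1 : F.derivative.natDegree ≤ n - 1 := hn ▸ natDegree_derivative_le F
    have := j.2
    rw [natDegree_X_pow]
    omega

/-- row identity: the rows of the Sylvester matrix encode the coefficients of the
shifted polynomials -/
lemma sylM_row {S : Type*} [CommRing S] (φ : MvPolynomial (Fin r) K →+* S)
    (hn : F.natDegree = n) (hn1 : 1 ≤ n) (i : Fin (n-1) ⊕ Fin n) :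
    ∑ kk : Fin (n-1) ⊕ Fin n, Polynomial.C (φ (sylM F n i kk)) * X ^ (finSumFinEquiv kk : ℕ)
      = (sylW F n i).map φ := by
  have hdeg : ((sylW F n i).map φ).natDegree < (n-1) + n :=
    lt_of_le_of_lt natDegree_map_le (sylW_natDegree_lt F n hn hn1 i)
  conv_rhs => rw [((sylW F n i).map φ).as_sum_range' ((n-1)+n) hdeg]
  rw [← Fin.sum_univ_eq_sum_range (fun d => monomial d (((sylW F n i).map φ).coeff d)) ((n-1)+n)]
  rw [← Equiv.sum_comp finSumFinEquiv
    (fun d => monomial (d : ℕ) (((sylW F n i).map φ).coeff (d : ℕ)))]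
  refine Finset.sum_congr rfl fun kk _ => ?_
  rw [sylM, coeff_map, C_mul_X_pow_eq_monomial]

end Sylvester

section SylvesterMain

variable {k : Type*} [Field k] {θ : MvPolynomial (Fin r) K →+* k}
  {F : Polynomial (MvPolynomial (Fin r) K)} {n : ℕ}

set_option maxHeartbeats 1000000 in
lemma sylvester_adjugate (hn : F.natDegree = n) (hn1 : 1 ≤ n) :
    ∃ Ap Bp : Polynomial (MvPolynomial (Fin r) K),
      Polynomial.C (sylM F n).det = Ap * F + Bp * F.derivative := by
  classical
  set ι := Fin (n-1) ⊕ Fin n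
  set M' : Matrix ι ι (Polynomial (MvPolynomial (Fin r) K)) :=
    (sylM F n).map (Polynomial.C : MvPolynomial (Fin r) K →+* _) with hM'
  set u : ι → Polynomial (MvPolynomial (Fin r) K) := fun kk => X ^ (finSumFinEquiv kk : ℕ)
  have hrow : M'.mulVec u = fun i => sylW F n i := by
    funext i
    rw [Matrix.mulVec, show (dotProduct (M' i) u)
      = ∑ kk : ι, Polynomial.C ((sylM F n) i kk) * X ^ (finSumFinEquiv kk : ℕ) from rfl]
    have := sylM_row F n (RingHom.id _) hn hn1 i
    simp only [RingHom.id_apply] at this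
    rw [this]
    simp
  have hadj : (M'.adjugate).mulVec (M'.mulVec u) = M'.det • u := by
    rw [Matrix.mulVec_mulVec, Matrix.adjugate_mul, Matrix.smul_mulVec, Matrix.one_mulVec]
  have hs0 : 0 < (n-1) + n := by omega
  set k0 : ι := finSumFinEquiv.symm ⟨0, hs0⟩
  have hu : u k0 = 1 := by
    simp only [u, k0, Equiv.apply_symm_apply]
    rfl
  have hdet : M'.det = Polynomial.C (sylM F n).det :=
    (RingHom.map_det (Polynomial.C) (sylM F n)).symm
  have hkey := congrFun (hrow ▸ hadj) k0
  rw [hdet, Pi.smul_apply, hu, smul_eq_mul, mul_one] at hkey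
  rw [Matrix.mulVec, show dotProduct (M'.adjugate k0) (fun i => sylW F n i)
    = ∑ i : ι, M'.adjugate k0 i * sylW F n i from rfl, Fintype.sum_sum_type] at hkey
  refine ⟨∑ i : Fin (n-1), M'.adjugate k0 (Sum.inl i) * X ^ (i : ℕ),
    ∑ j : Fin n, M'.adjugate k0 (Sum.inr j) * X ^ (j : ℕ), ?_⟩
  rw [← hkey, Finset.sum_mul, Finset.sum_mul]
  refine congrArg₂ (· + ·) ?_ ?_
  · exact Finset.sum_congr rfl fun i _ => by rw [sylW]; ring
  · exact Finset.sum_congr rfl fun j _ => by rw [sylW]; ring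
end SylvesterMain

section SylvesterMain2
variable {k : Type*} [Field k] {θ : MvPolynomial (Fin r) K →+* k}
  {F : Polynomial (MvPolynomial (Fin r) K)} {n : ℕ}

lemma sylvester_det_ne_zero (hθ : Function.Injective θ) (hn : F.natDegree = n) (hn1 : 1 ≤ n)
    (hF : F ≠ 0)
    (hcop : IsCoprime (F.map θ) ((F.map θ).derivative)) :
    (sylM F n).det ≠ 0 := by
  classical
  set ι := Fin (n-1) ⊕ Fin n
  intro h0
  have hdet0 : ((sylM F n).map θ).det = 0 := by
    rw [← RingHom.mapMatrix_apply, ← RingHom.map_det, h0, map_zero]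
  obtain ⟨v, hv, hvM⟩ := Matrix.exists_vecMul_eq_zero_iff.mpr hdet0
  set Apoly : Polynomial k := ∑ i : Fin (n-1), Polynomial.C (v (Sum.inl i)) * X ^ (i : ℕ)
  set Bpoly : Polynomial k := ∑ j : Fin n, Polynomial.C (v (Sum.inr j)) * X ^ (j : ℕ)
  have hcomb : Apoly * (F.map θ) + Bpoly * (F.map θ).derivative = 0 := by
    have hswap : Apoly * (F.map θ) + Bpoly * (F.map θ).derivative
        = ∑ i : ι, Polynomial.C (v i) * ((sylW F n i).map θ) := by
      rw [Fintype.sum_sum_type, Finset.sum_mul, Finset.sum_mul]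
      congr 1
      · refine Finset.sum_congr rfl fun i _ => ?_
        rw [sylW]
        simp only [Polynomial.map_mul, Polynomial.map_pow, Polynomial.map_X]
        ring
      · refine Finset.sum_congr rfl fun j _ => ?_
        rw [sylW]
        simp only [Polynomial.map_mul, Polynomial.map_pow, Polynomial.map_X, derivative_map]
        ring
    rw [hswap]
    have : ∀ i : ι, (sylW F n i).map θ
        = ∑ kk : ι, Polynomial.C (θ (sylM F n i kk)) * X ^ (finSumFinEquiv kk : ℕ) :=
      fun i => (sylM_row F n θ hn hn1 i).symm
    simp_rw [this, Finset.mul_sum, ← mul_assoc, ← map_mul]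
    rw [Finset.sum_comm]
    refine Finset.sum_eq_zero fun kk _ => ?_
    have hcol : ∑ i : ι, v i * θ (sylM F n i kk) = 0 := by
      have h2 := congrFun hvM kk
      simp only [Matrix.vecMul, dotProduct, Matrix.map_apply, Pi.zero_apply] at h2
      rw [show (∑ i : ι, v i * θ (sylM F n i kk)) = ∑ i : ι, v i * (sylM F n).map θ i kk from
        Finset.sum_congr rfl fun i _ => rfl]
      exact h2
    rw [← Finset.sum_mul, ← map_sum (Polynomial.C : k →+* Polynomial k), hcol]
    simp
  have hFnd : (F.map θ).natDegree = n := by rw [← hn]; exact natDegree_map_eq_of_injective hθ F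
  have hFt0 : (F.map θ) ≠ 0 := fun h => hF (by
    have := Polynomial.map_injective θ hθ
    exact this (by rw [h, Polynomial.map_zero]))
  have hBdeg : Bpoly.natDegree ≤ n - 1 :=
    natDegree_sum_le_of_forall_le _ _ fun j _ => le_trans (natDegree_C_mul_le _ _)
      (by rw [natDegree_X_pow]; omega)
  have hB0 : Bpoly = 0 := by
    by_contra hB
    have hdvd : (F.map θ) ∣ Bpoly := by
      refine hcop.dvd_of_dvd_mul_right ?_
      refine ⟨-Apoly, ?_⟩
      linear_combination hcomb
    have := Polynomial.natDegree_le_of_dvd hdvd hB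
    omega
  have hA0 : Apoly = 0 := by
    rw [hB0, zero_mul, add_zero, mul_eq_zero] at hcomb
    exact hcomb.resolve_right hFt0
  apply hv
  funext i
  match i with
  | Sum.inl i =>
    have := congrArg (fun q => Polynomial.coeff q (i : ℕ)) hA0
    simp only [Apoly, Polynomial.finset_sum_coeff, C_mul_X_pow_eq_monomial,
      Polynomial.coeff_monomial, Polynomial.coeff_zero] at this
    rw [Finset.sum_eq_single i] at this
    · rw [if_pos rfl] at this; exact this
    · intro b _ hb
      rw [if_neg (fun hh => hb (Fin.val_injective hh))]
    · intro hni; exact absurd (Finset.mem_univ i) hni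
  | Sum.inr j =>
    have := congrArg (fun q => Polynomial.coeff q (j : ℕ)) hB0
    simp only [Bpoly, Polynomial.finset_sum_coeff, C_mul_X_pow_eq_monomial,
      Polynomial.coeff_monomial, Polynomial.coeff_zero] at this
    rw [Finset.sum_eq_single j] at this
    · rw [if_pos rfl] at this; exact this
    · intro b _ hb
      rw [if_neg (fun hh => hb (Fin.val_injective hh))]
    · intro hnj; exact absurd (Finset.mem_univ j) hnj

end SylvesterMain2

section SylvesterDeg
variable {F : Polynomial (MvPolynomial (Fin r) K)} {n dx' : ℕ}

lemma sylM_entry_totalDegree (hdX : ∀ j, (F.coeff j).totalDegree ≤ dx')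
    (i kk : Fin (n-1) ⊕ Fin n) : ((sylM F n i kk)).totalDegree ≤ dx' := by
  have hder : ∀ e : ℕ, (F.derivative.coeff e).totalDegree ≤ dx' := by
    intro e
    rw [coeff_derivative]
    refine le_trans (MvPolynomial.totalDegree_mul _ _) ?_
    have hc : ((e + 1 : ℕ) : MvPolynomial (Fin r) K)
        = MvPolynomial.C ((e + 1 : ℕ) : K) := by
      simp
    have : (((e : MvPolynomial (Fin r) K) + 1)).totalDegree = 0 := by
      rw [show ((e : MvPolynomial (Fin r) K) + 1) = ((e + 1 : ℕ) : MvPolynomial (Fin r) K) by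
        push_cast; ring, hc, MvPolynomial.totalDegree_C]
    rw [this]
    simpa using hdX (e + 1)
  rw [sylM]
  match i with
  | Sum.inl i =>
    rw [sylW, coeff_mul_X_pow']
    split
    · exact hdX _
    · simp
  | Sum.inr j =>
    rw [sylW, coeff_mul_X_pow']
    split
    · exact hder _
    · simp

lemma sylM_det_totalDegree (hdX : ∀ j, (F.coeff j).totalDegree ≤ dx') :
    ((sylM F n).det).totalDegree ≤ ((n-1) + n) * dx' := by
  classical
  rw [Matrix.det_apply']
  refine le_trans (MvPolynomial.totalDegree_finset_sum _ _) (Finset.sup_le fun p _ => ?_)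
  refine le_trans (MvPolynomial.totalDegree_mul _ _) ?_
  have hsign : ((Equiv.Perm.sign p : ℤ) : MvPolynomial (Fin r) K).totalDegree = 0 := by
    rw [show ((Equiv.Perm.sign p : ℤ) : MvPolynomial (Fin r) K)
      = MvPolynomial.C ((Equiv.Perm.sign p : ℤ) : K) from (map_intCast (MvPolynomial.C : K →+* MvPolynomial (Fin r) K) ((Equiv.Perm.sign p : ℤ))).symm,
      MvPolynomial.totalDegree_C]
  rw [hsign, zero_add]
  refine le_trans (MvPolynomial.totalDegree_finset_prod _ _) ?_
  have hcard : ∑ i : Fin (n-1) ⊕ Fin n, dx' = ((n-1) + n) * dx' := by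
    rw [Finset.sum_const, Finset.card_univ, Fintype.card_sum, Fintype.card_fin,
      Fintype.card_fin, smul_eq_mul]
  rw [← hcard]
  exact Finset.sum_le_sum fun i _ => sylM_entry_totalDegree hdX _ _
end SylvesterDeg

end Aux



set_option maxHeartbeats 1600000 in
/-- Let `K` be a field of characteristic zero and `y₀ ∈ K[[x₁,…,x_r]]` a simple root of a
nonzero polynomial `P ∈ K[x₁,…,x_r][y]` with `deg_x P ≤ d_x` and `deg_y P ≤ d_y`
(simple root: `P(x,y₀) = 0` and `∂P/∂y(x,y₀) ≠ 0`).  If `y₁ ∈ K[[x₁,…,x_r]]` is any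
other root of `P` with `y₁ ≠ y₀`, then the order of `y₀ - y₁` is at most `2·d_x·d_y`,
i.e. `y₀ - y₁` has a nonzero coefficient in total degree at most `2·d_x·d_y`. -/
theorem order_sub_roots_le (K : Type*) [Field K] [CharZero K] (r dx dy : ℕ)
    (P : Polynomial (MvPolynomial (Fin r) K)) (hP : P ≠ 0)
    (hPx : ∀ j, (P.coeff j).totalDegree ≤ dx) (hPy : P.natDegree ≤ dy)
    (y0 y1 : MvPowerSeries (Fin r) K)
    (hroot : Polynomial.eval₂ MvPolynomial.coeToMvPowerSeries.ringHom y0 P = 0)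
    (hsimple : Polynomial.eval₂ MvPolynomial.coeToMvPowerSeries.ringHom y0
      (Polynomial.derivative P) ≠ 0)
    (hroot1 : Polynomial.eval₂ MvPolynomial.coeToMvPowerSeries.ringHom y1 P = 0)
    (hne : y1 ≠ y0) :
    ∃ n : Fin r →₀ ℕ,
      MvPowerSeries.coeff n (y0 - y1) ≠ 0 ∧ (∑ i, n i) ≤ 2 * dx * dy := by
  classical
  by_contra hcon
  push_neg at hcon
  have hlow : LowZero (2 * dx * dy) (y0 - y1) := by
    intro m hm
    by_contra hc
    exact absurd hm (not_le.mpr (hcon m hc))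
  letI : IsDomain (MvPowerSeries (Fin r) K) := NoZeroDivisors.to_isDomain _
  set ε : MvPolynomial (Fin r) K →+* MvPowerSeries (Fin r) K :=
    MvPolynomial.coeToMvPowerSeries.ringHom with hεdef
  have hε : Function.Injective ε := by
    intro a b h
    ext m
    have := congrArg (MvPowerSeries.coeff m) h
    simpa [hεdef, MvPolynomial.coeff_coe] using this
  set L := FractionRing (MvPowerSeries (Fin r) K) with hLdef
  have hιR : Function.Injective (algebraMap (MvPowerSeries (Fin r) K) L) :=
    IsFractionRing.injective _ _
  set Kx := FractionRing (MvPolynomial (Fin r) K) with hKxdef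
  have hθ : Function.Injective (algebraMap (MvPolynomial (Fin r) K) Kx) :=
    IsFractionRing.injective _ _
  set θ : MvPolynomial (Fin r) K →+* Kx := algebraMap _ _ with hθdef
  have hcompinj : Function.Injective
      ((algebraMap (MvPowerSeries (Fin r) K) L).comp ε) := hιR.comp hε
  letI : Algebra Kx L := (IsFractionRing.lift hcompinj).toAlgebra
  letI : CharZero Kx := charZero_of_injective_algebraMap hθ
  have halg : (algebraMap Kx L).comp θ
      = (algebraMap (MvPowerSeries (Fin r) K) L).comp ε := by
    exact IsLocalization.lift_comp _
  have hevalc : ∀ (Q : Polynomial (MvPolynomial (Fin r) K)) (y : MvPowerSeries (Fin r) K),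
      (Polynomial.aeval (algebraMap (MvPowerSeries (Fin r) K) L y)) (Q.map θ)
        = algebraMap (MvPowerSeries (Fin r) K) L (Q.eval₂ ε y) := by
    intro Q y
    rw [Polynomial.aeval_def, Polynomial.eval₂_map, halg, Polynomial.hom_eval₂]
  set y0' := algebraMap (MvPowerSeries (Fin r) K) L y0 with hy0'
  set y1' := algebraMap (MvPowerSeries (Fin r) K) L y1 with hy1'
  have hPmapne : P.map θ ≠ 0 := fun h => hP (Polynomial.map_injective θ hθ (by
    rw [h, Polynomial.map_zero]))
  have haev0 : Polynomial.aeval y0' (P.map θ) = 0 := by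
    rw [hevalc P y0, hroot, map_zero]
  have haev1 : Polynomial.aeval y1' (P.map θ) = 0 := by
    rw [hevalc P y1, hroot1, map_zero]
  have hy0int : IsIntegral Kx y0' := IsAlgebraic.isIntegral ⟨P.map θ, hPmapne, haev0⟩
  have hy1int : IsIntegral Kx y1' := IsAlgebraic.isIntegral ⟨P.map θ, hPmapne, haev1⟩
  obtain ⟨Hb, hHsep, hHdvd, hHb0, hHb1, hHbne, hHbdeg⟩ :
      ∃ Hb : Polynomial Kx, Hb.Separable ∧ Hb ∣ P.map θ ∧
        Polynomial.aeval y0' Hb = 0 ∧ Polynomial.aeval y1' Hb = 0 ∧ Hb ≠ 0 ∧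
        0 < Hb.natDegree := by
    rcases eq_or_ne (minpoly Kx y0') (minpoly Kx y1') with hμ | hμ
    · refine ⟨minpoly Kx y0', (minpoly.irreducible hy0int).separable,
        minpoly.dvd Kx y0' haev0, minpoly.aeval Kx y0', ?_, minpoly.ne_zero hy0int,
        minpoly.natDegree_pos hy0int⟩
      rw [hμ]
      exact minpoly.aeval Kx y1'
    · have hirr0 := minpoly.irreducible hy0int
      have hirr1 := minpoly.irreducible hy1int
      have hcop01 : IsCoprime (minpoly Kx y0') (minpoly Kx y1') := by
        refine (EuclideanDomain.gcd_isUnit_iff).1 ?_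
        have hd0 := EuclideanDomain.gcd_dvd_left (minpoly Kx y0') (minpoly Kx y1')
        have hd1 := EuclideanDomain.gcd_dvd_right (minpoly Kx y0') (minpoly Kx y1')
        obtain ⟨cc, hcc⟩ := hd0
        rcases hirr0.isUnit_or_isUnit hcc with hu | hu
        · exact hu
        · exfalso
          have hassoc : Associated (EuclideanDomain.gcd (minpoly Kx y0') (minpoly Kx y1'))
              (minpoly Kx y0') := ⟨hu.unit, by rw [IsUnit.unit_spec, ← hcc]⟩
          have hdvd01 : minpoly Kx y0' ∣ minpoly Kx y1' := hassoc.symm.dvd.trans hd1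
          exact hμ (Polynomial.eq_of_monic_of_associated (minpoly.monic hy0int)
            (minpoly.monic hy1int) (hirr0.associated_of_dvd hirr1 hdvd01))
      refine ⟨minpoly Kx y0' * minpoly Kx y1',
        (hirr0.separable).mul (hirr1.separable) hcop01,
        hcop01.mul_dvd (minpoly.dvd Kx y0' haev0) (minpoly.dvd Kx y1' haev1), ?_, ?_,
        mul_ne_zero (minpoly.ne_zero hy0int) (minpoly.ne_zero hy1int), ?_⟩
      · rw [map_mul, minpoly.aeval, zero_mul]
      · rw [map_mul, minpoly.aeval, mul_zero]
      · rw [Polynomial.natDegree_mul (minpoly.ne_zero hy0int) (minpoly.ne_zero hy1int)]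
        have := minpoly.natDegree_pos hy0int
        omega
  -- clear denominators
  letI : NormalizationMonoid (MvPolynomial (Fin r) K) :=
    UniqueFactorizationMonoid.strongNormalizationMonoid.toNormalizationMonoid
  letI : NormalizedGCDMonoid (MvPolynomial (Fin r) K) :=
    UniqueFactorizationMonoid.toNormalizedGCDMonoid _
  obtain ⟨b, hb⟩ := IsLocalization.integerNormalization_map_to_map
    (nonZeroDivisors (MvPolynomial (Fin r) K)) Hb
  set H1 := IsLocalization.integerNormalization
    (nonZeroDivisors (MvPolynomial (Fin r) K)) Hb with hH1def
  have hθb : θ (b : MvPolynomial (Fin r) K) ≠ 0 := by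
    have hbne : (b : MvPolynomial (Fin r) K) ≠ 0 := nonZeroDivisors.coe_ne_zero b
    exact fun h => hbne (hθ (by rw [h, map_zero]))
  have hb' : H1.map θ = Polynomial.C (θ (b : MvPolynomial (Fin r) K)) * Hb := by
    rw [hb]
    ext i
    rw [Polynomial.coeff_smul, Polynomial.coeff_C_mul]
    exact Algebra.smul_def _ _
  have hH1ne : H1 ≠ 0 := by
    intro h
    apply mul_ne_zero (Polynomial.C_ne_zero.mpr hθb) hHbne
    rw [← hb', h, Polynomial.map_zero]
  have hcontne : θ H1.content ≠ 0 := fun h =>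
    hH1ne (Polynomial.content_eq_zero_iff.mp (hθ (by rw [h, map_zero])))
  set HA := H1.primPart with hHAdef
  set c : Kx := (θ H1.content)⁻¹ * θ (b : MvPolynomial (Fin r) K) with hcdef
  have hc : c ≠ 0 := mul_ne_zero (inv_ne_zero hcontne) hθb
  have hHA : HA.map θ = Polynomial.C c * Hb := by
    have h2 : Polynomial.C (θ H1.content) * HA.map θ
        = Polynomial.C (θ (b : MvPolynomial (Fin r) K)) * Hb := by
      rw [← hb']
      conv_rhs => rw [H1.eq_C_content_mul_primPart]
      rw [Polynomial.map_mul, Polynomial.map_C]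
    have h4 : Polynomial.C ((θ H1.content)⁻¹) * (Polynomial.C (θ H1.content) * HA.map θ)
        = HA.map θ := by
      rw [← mul_assoc, ← Polynomial.C_mul, inv_mul_cancel₀ hcontne, Polynomial.C_1, one_mul]
    rw [← h4, h2, ← mul_assoc, ← Polynomial.C_mul, hcdef]
  have hHAne : HA ≠ 0 := H1.isPrimitive_primPart.ne_zero
  set n := HA.natDegree with hndef
  have hHAmapdeg : (HA.map θ).natDegree = n := Polynomial.natDegree_map_eq_of_injective hθ HA
  have hn1 : 1 ≤ n := by
    rw [← hHAmapdeg, hHA, Polynomial.natDegree_C_mul hc]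
    omega
  have hCc : IsUnit (Polynomial.C c) := Polynomial.isUnit_C.mpr hc.isUnit
  have hcop : IsCoprime (HA.map θ) (Polynomial.derivative (HA.map θ)) := by
    rw [hHA, Polynomial.derivative_C_mul]
    rw [isCoprime_mul_unit_left_left hCc, isCoprime_mul_unit_left_right hCc]
    exact hHsep
  have hdvdP : HA ∣ P := by
    have h1 : HA.map θ ∣ P.map θ := by
      obtain ⟨G, hG⟩ := hHdvd
      refine ⟨Polynomial.C c⁻¹ * G, ?_⟩
      rw [hHA, hG]
      rw [show Polynomial.C c * Hb * (Polynomial.C c⁻¹ * G)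
        = (Polynomial.C c * Polynomial.C c⁻¹) * (Hb * G) by ring, ← Polynomial.C_mul,
        mul_inv_cancel₀ hc, Polynomial.C_1, one_mul]
    have hPcont : θ P.content ≠ 0 := fun h =>
      hP (Polynomial.content_eq_zero_iff.mp (hθ (by rw [h, map_zero])))
    have hPsplit : P.map θ = Polynomial.C (θ P.content) * P.primPart.map θ := by
      conv_lhs => rw [P.eq_C_content_mul_primPart]
      rw [Polynomial.map_mul, Polynomial.map_C]
    have h2 : HA.map θ ∣ P.primPart.map θ := by
      obtain ⟨G, hG⟩ := h1
      refine ⟨Polynomial.C (θ P.content)⁻¹ * G, ?_⟩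
      have h5 : Polynomial.C ((θ P.content)⁻¹) * (P.map θ) = P.primPart.map θ := by
        rw [hPsplit, ← mul_assoc, ← Polynomial.C_mul, inv_mul_cancel₀ hPcont,
          Polynomial.C_1, one_mul]
      rw [← h5, hG]
      ring
    exact (H1.isPrimitive_primPart.dvd_of_fraction_map_dvd_fraction_map
      h2).trans P.primPart_dvd
  have hdX : ∀ j, (HA.coeff j).totalDegree ≤ dx := by
    intro j
    refine le_trans (coeff_totalDegree_le_degX HA j) ?_
    refine le_trans (degX_le_of_dvd hdvdP hP) ?_
    exact Finset.sup_le fun j _ => hPx j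
  have hnle : n ≤ dy := le_trans (Polynomial.natDegree_le_of_dvd hdvdP hP) hPy
  -- evaluations of HA vanish
  have hevHA : ∀ (y : MvPowerSeries (Fin r) K),
      Polynomial.aeval (algebraMap (MvPowerSeries (Fin r) K) L y) Hb = 0 →
      HA.eval₂ ε y = 0 := by
    intro y hy
    apply hιR
    rw [map_zero, ← hevalc HA y, hHA, map_mul, hy, mul_zero]
  have hE0 : HA.eval₂ ε y0 = 0 := hevHA y0 hHb0
  have hE1 : HA.eval₂ ε y1 = 0 := hevHA y1 hHb1
  -- Sylvester
  obtain ⟨Ap, Bp, hAB⟩ := sylvester_adjugate (F := HA) (n := n) rfl hn1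
  have hgne : (sylM HA n).det ≠ 0 :=
    sylvester_det_ne_zero hθ rfl hn1 hHAne hcop
  have hgdeg : ((sylM HA n).det).totalDegree ≤ ((n-1) + n) * dx :=
    sylM_det_totalDegree hdX
  -- evaluate the Bezout identity at y0
  have hεg : ε ((sylM HA n).det)
      = Ap.eval₂ ε y0 * HA.eval₂ ε y0
        + Bp.eval₂ ε y0 * (Polynomial.derivative HA).eval₂ ε y0 := by
    have := congrArg (fun q => Polynomial.eval₂ ε y0 q) hAB
    simpa [Polynomial.eval₂_add, Polynomial.eval₂_mul, Polynomial.eval₂_C] using this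
  have hfac : ∃ s, (Polynomial.derivative HA).eval₂ ε y0 = (y0 - y1) * s := by
    have h0 : (HA.map ε).eval y0 = 0 := by rw [Polynomial.eval_map]; exact hE0
    have h1 : (HA.map ε).eval y1 = 0 := by rw [Polynomial.eval_map]; exact hE1
    obtain ⟨s, hs⟩ := deriv_eval_factor h0 h1 hne.symm
    refine ⟨s, ?_⟩
    rw [Polynomial.derivative_map] at hs
    rw [← Polynomial.eval_map, hs]
  obtain ⟨s, hs⟩ := hfac
  rw [hE0, mul_zero, zero_add, hs] at hεg
  have hεglow : LowZero (2 * dx * dy) (ε ((sylM HA n).det)) := by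
    rw [hεg, show Bp.eval₂ ε y0 * ((y0 - y1) * s)
      = (Bp.eval₂ ε y0 * s) * (y0 - y1) by ring]
    exact hlow.mul_left _
  have hbound : ((sylM HA n).det).totalDegree ≤ 2 * dx * dy := by
    refine le_trans hgdeg ?_
    have h1 : (n - 1) + n ≤ 2 * dy := by omega
    calc ((n - 1) + n) * dx ≤ (2 * dy) * dx := Nat.mul_le_mul_right _ h1
      _ = 2 * dx * dy := by ring
  exact not_lowZero_of_poly hgne hbound hεglow
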